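/- Let r > 0, let ℓ ≥ 1, and let K = {a₀ < a₁ < … < a_{ℓ−1}} be a set of ℓ nonnegative integers. Let U_K be the ℓ × ℓ real matrix with (b, c)-entry ⟨ψ_{c,r}, ψ_{a_b,0}⟩ for 0 ≤ b, c ≤ ℓ−1. Then |det U_K| = e^{−ℓr²/4} · √(1/(F_{[ℓ]} · F_K)) · (r/√2)^{Σ_K − ℓ(ℓ−1)/2} · C_K. -/

import Mathlib

open MeasureTheory Real

/-- The physicist's Hermite polynomial `h_j(x) = (−1)^j e^{x²} (d^j/dx^j) e^{−x²}`. -/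
noncomputable def hermitePoly (j : ℕ) (x : ℝ) : ℝ :=
  (-1)^j * Real.exp (x^2) * iteratedDeriv j (fun t => Real.exp (-(t^2))) x

/-- The Hermite function `ψ_j`. -/
noncomputable def psi (j : ℕ) (x : ℝ) : ℝ :=
  (-1)^j * (Real.sqrt (2^j * (Nat.factorial j : ℝ) * Real.sqrt Real.pi))⁻¹ *
    hermitePoly j x * Real.exp (-(x^2) / 2)

/-- `⟨ψ_{c,r}, ψ_{b,0}⟩`. -/
noncomputable def psiIP (r : ℝ) (c b : ℕ) : ℝ := ∫ x, psi c (x - r) * psi b x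

/-- `C_K = ∏_{c₂ < c₁} (a_{c₁} − a_{c₂})`. -/
noncomputable def CK {ℓ : ℕ} (a : Fin ℓ → ℕ) : ℝ :=
  ∏ c₁, ∏ c₂ ∈ Finset.univ.filter (· < c₁), ((a c₁ : ℝ) - (a c₂ : ℝ))

/-- `F_K = ∏_c (a_c)!`. -/
noncomputable def FK {ℓ : ℕ} (a : Fin ℓ → ℕ) : ℝ := ∏ c, (Nat.factorial (a c) : ℝ)

/-- `F_{[ℓ]} = ∏_{c=0}^{ℓ−1} c!`. -/
noncomputable def Fl (ℓ : ℕ) : ℝ := ∏ c ∈ Finset.range ℓ, (Nat.factorial c : ℝ)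

open Polynomial Finset

noncomputable def Hp : ℕ → Polynomial ℝ
  | 0 => 1
  | n+1 => Polynomial.C 2 * Polynomial.X * Hp n - Polynomial.derivative (Hp n)

lemma Hp_zero : Hp 0 = 1 := rfl
lemma Hp_succ (n : ℕ) : Hp (n+1) = Polynomial.C 2 * Polynomial.X * Hp n - Polynomial.derivative (Hp n) := rfl

noncomputable def Nn (j : ℕ) : ℝ := (Real.sqrt (2^j * (Nat.factorial j : ℝ) * Real.sqrt Real.pi))⁻¹

lemma gauss_hasDerivAt (x : ℝ) :
    HasDerivAt (fun t : ℝ => Real.exp (-(t^2))) (Real.exp (-(x^2)) * (-(2*x))) x := by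
  have h : HasDerivAt (fun t : ℝ => -(t^2)) (-(2*x)) x := by
    convert (hasDerivAt_pow 2 x).neg using 1 <;> first | rfl | simp
  exact h.exp

lemma iteratedDeriv_gauss (n : ℕ) (x : ℝ) :
    iteratedDeriv n (fun t : ℝ => Real.exp (-(t^2))) x
      = (-1)^n * (Hp n).eval x * Real.exp (-(x^2)) := by
  induction n generalizing x with
  | zero => simp [Hp]
  | succ n ih =>
    rw [iteratedDeriv_succ]
    have hfun : iteratedDeriv n (fun t : ℝ => Real.exp (-(t^2)))
        = fun x => (-1)^n * (Hp n).eval x * Real.exp (-(x^2)) := funext ih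
    rw [hfun]
    have h1 : HasDerivAt (fun x : ℝ => (-1:ℝ)^n * (Hp n).eval x * Real.exp (-(x^2)))
        ((-1)^(n+1) * (Hp (n+1)).eval x * Real.exp (-(x^2))) x := by
      have hp : HasDerivAt (fun x : ℝ => (Hp n).eval x) ((derivative (Hp n)).eval x) x :=
        (Hp n).hasDerivAt x
      have := ((hp.const_mul ((-1:ℝ)^n)).fun_mul (gauss_hasDerivAt x))
      refine this.congr_deriv ?_
      simp only [Hp_succ, eval_sub, eval_mul, eval_C, eval_X, pow_succ]
      ring
    exact h1.deriv

lemma hermitePoly_eq_eval (j : ℕ) (x : ℝ) :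
    hermitePoly j x = (Hp j).eval x := by
  rw [hermitePoly, iteratedDeriv_gauss]
  rw [show (-1:ℝ)^j * Real.exp (x^2) * ((-1)^j * (Hp j).eval x * Real.exp (-(x^2)))
      = ((-1)^j)^2 * (Hp j).eval x * (Real.exp (x^2) * Real.exp (-(x^2))) by ring]
  rw [← Real.exp_add]
  simp [← pow_mul, pow_mul']

lemma Hp_deriv (n : ℕ) : derivative (Hp (n+1)) = Polynomial.C (2*(n+1) : ℝ) * Hp n := by
  induction n with
  | zero =>
    rw [Hp_succ 0, Hp_zero]
    simp
  | succ n ih =>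
    rw [Hp_succ (n+1), derivative_sub, derivative_mul, derivative_mul, derivative_C,
      derivative_X, ih, derivative_C_mul]
    rw [Hp_succ n]
    rw [show (2*((↑(n+1):ℝ)+1)) = 2 + 2*((n:ℝ)+1) by push_cast; ring, Polynomial.C_add]
    ring

lemma Hp_natDegree_le (n : ℕ) : (Hp n).natDegree ≤ n := by
  induction n with
  | zero => simp [Hp_zero]
  | succ n ih =>
    rw [Hp_succ]
    refine (natDegree_sub_le _ _).trans (max_le ?_ ?_)
    · refine (natDegree_mul_le).trans ?_
      have : (Polynomial.C (2:ℝ) * Polynomial.X).natDegree ≤ 1 := by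
        refine (natDegree_mul_le).trans ?_
        simp
      omega
    · exact (natDegree_derivative_le _).trans (by omega)

lemma Hp_iter_deriv (k : ℕ) : ∀ n : ℕ, k ≤ n →
    derivative^[k] (Hp n) = Polynomial.C ((2:ℝ)^k * (n.descFactorial k : ℝ)) * Hp (n - k) := by
  induction k with
  | zero => intro n _; simp
  | succ k ih =>
    intro n hk
    obtain ⟨m, rfl⟩ : ∃ m, n = m + 1 := ⟨n - 1, by omega⟩
    rw [Function.iterate_succ_apply, Hp_deriv, iterate_derivative_C_mul,
      ih m (by omega)]
    rw [← mul_assoc, ← Polynomial.C_mul]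
    congr 2
    · rw [Nat.succ_descFactorial_succ]
      push_cast
      ring
    · omega

lemma Hp_taylor (n : ℕ) (x y : ℝ) :
    (Hp n).eval (x + y) = ∑ k ∈ range (n+1), (n.choose k : ℝ) * (2*y)^k * (Hp (n-k)).eval x := by
  have h1 : (Hp n).eval (x + y) = (taylor x (Hp n)).eval y := by
    rw [taylor_eval, add_comm]
  rw [h1, eval_eq_sum_range' (n := n+1) (by rw [natDegree_taylor]; exact Nat.lt_succ_of_le (Hp_natDegree_le n))]
  refine Finset.sum_congr rfl fun k hk => ?_
  rw [Finset.mem_range] at hk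
  have hkn : k ≤ n := by omega
  have hcoeff : (taylor x (Hp n)).coeff k = (hasseDeriv k (Hp n)).eval x := taylor_coeff (r := x) (f := Hp n) k
  have hhd : (k.factorial : ℝ) * (hasseDeriv k (Hp n)).eval x = (derivative^[k] (Hp n)).eval x := by
    rw [← factorial_smul_hasseDeriv]
    simp only [Pi.smul_apply, LinearMap.smul_apply]
    rw [Polynomial.eval_smul]
    simp [nsmul_eq_mul]
  have hfac : (k.factorial : ℝ) ≠ 0 := by positivity
  have : (taylor x (Hp n)).coeff k = (derivative^[k] (Hp n)).eval x / k.factorial := by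
    rw [hcoeff, eq_div_iff hfac, mul_comm]
    exact hhd
  rw [this, Hp_iter_deriv k n hkn]
  rw [eval_mul, eval_C]
  have hdf : (n.descFactorial k : ℝ) = (k.factorial : ℝ) * (n.choose k : ℝ) := by
    rw [← Nat.cast_mul, Nat.descFactorial_eq_factorial_mul_choose]
  rw [hdf]
  field_simp
  ring

lemma myPowFacExp (t : ℝ) (ht : 0 ≤ t) (n : ℕ) :
    t^n / n.factorial ≤ Real.exp t := by
  have h := Real.sum_le_exp_of_nonneg ht (n+1)
  refine le_trans ?_ h
  have : t^n / n.factorial = t^n / n.factorial := rfl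
  calc t^n / n.factorial ≤ ∑ i ∈ range (n+1), t^i / i.factorial := by
        refine Finset.single_le_sum (f := fun i => t^i / (i.factorial : ℝ)) ?_ (self_mem_range_succ n)
        intro i _; positivity
    _ = _ := rfl

lemma integrable_pow_gauss (n : ℕ) :
    Integrable (fun x : ℝ => x^n * Real.exp (-(x^2))) := by
  have hg : Integrable (fun x : ℝ => (1 + (2:ℝ)^n * n.factorial) * Real.exp (-(1/2) * x^2)) :=
    (integrable_exp_neg_mul_sq (by norm_num)).const_mul _
  refine hg.mono' ?_ (ae_of_all _ fun x => ?_)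
  · exact ((continuous_pow n).mul (continuous_neg.comp (continuous_pow 2)).rexp).aestronglyMeasurable
  · rw [Real.norm_eq_abs, abs_mul, abs_pow, abs_of_pos (Real.exp_pos _)]
    have hsplit : Real.exp (-(x^2)) = Real.exp (-(1/2) * x^2) * Real.exp (-(1/2) * x^2) := by
      rw [← Real.exp_add]; ring_nf
    have hb : |x|^n * Real.exp (-(1/2) * x^2) ≤ 1 + (2:ℝ)^n * n.factorial := by
      rcases le_total (|x|) 1 with h1 | h1
      · have : |x|^n ≤ 1 := pow_le_one₀ (abs_nonneg x) h1
        have he : Real.exp (-(1/2) * x^2) ≤ 1 :=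
          Real.exp_le_one_iff.mpr (by nlinarith [sq_nonneg x])
        have hprod : |x|^n * Real.exp (-(1/2) * x^2) ≤ 1 := by
          nlinarith [pow_nonneg (abs_nonneg x) n, (Real.exp_pos (-(1/2) * x^2)).le]
        have hnn : (0:ℝ) ≤ (2:ℝ)^n * n.factorial := by positivity
        linarith
      · have h2 : |x|^n ≤ (x^2)^n := by
          calc |x|^n ≤ (|x|^2)^n := by
                rw [← pow_mul]
                exact pow_le_pow_right₀ h1 (by omega)
            _ = (x^2)^n := by rw [sq_abs]
        have h3 : (x^2/2)^n / n.factorial ≤ Real.exp (x^2/2) :=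
          myPowFacExp _ (by positivity) n
        have h4 : (x^2)^n ≤ 2^n * n.factorial * Real.exp (x^2/2) := by
          have : (x^2/2)^n = (x^2)^n / 2^n := by rw [div_pow]
          rw [this] at h3
          have hf : (0:ℝ) < n.factorial := by positivity
          have h2n : (0:ℝ) < 2^n := by positivity
          rw [div_div, div_le_iff₀ (by positivity)] at h3
          linarith [h3]
        have h5 : |x|^n * Real.exp (-(1/2) * x^2) ≤ 2^n * n.factorial := by
          have := mul_le_mul_of_nonneg_right (h2.trans h4) (Real.exp_pos (-(1/2)*x^2)).le
          calc |x|^n * Real.exp (-(1/2) * x^2) ≤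
              2^n * n.factorial * Real.exp (x^2/2) * Real.exp (-(1/2) * x^2) := this
            _ = 2^n * n.factorial * Real.exp (x^2/2 + -(1/2) * x^2) := by
                rw [Real.exp_add]; ring
            _ = 2^n * n.factorial := by ring_nf; rw [Real.exp_zero]; ring
        linarith
    calc |x|^n * Real.exp (-(x^2))
        = (|x|^n * Real.exp (-(1/2)*x^2)) * Real.exp (-(1/2)*x^2) := by rw [hsplit]; ring
      _ ≤ (1 + (2:ℝ)^n * n.factorial) * Real.exp (-(1/2) * x^2) := by
          exact mul_le_mul_of_nonneg_right hb (Real.exp_pos _).le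

lemma integrable_poly_gauss (p : Polynomial ℝ) :
    Integrable (fun x : ℝ => p.eval x * Real.exp (-(x^2))) := by
  have : (fun x : ℝ => p.eval x * Real.exp (-(x^2)))
      = fun x => ∑ i ∈ range (p.natDegree + 1), p.coeff i * (x^i * Real.exp (-(x^2))) := by
    funext x
    rw [eval_eq_sum_range, Finset.sum_mul]
    congr 1; funext i; ring
  rw [this]
  exact integrable_finset_sum _ fun i _ => ((integrable_pow_gauss i).const_mul _)

lemma hasDerivAt_Hp_gauss (k : ℕ) (x : ℝ) :
    HasDerivAt (fun x : ℝ => (Hp k).eval x * Real.exp (-(x^2)))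
      (-((Hp (k+1)).eval x * Real.exp (-(x^2)))) x := by
  have h := ((Hp k).hasDerivAt x).fun_mul (gauss_hasDerivAt x)
  refine h.congr_deriv ?_
  simp only [Hp_succ, eval_sub, eval_mul, eval_C, eval_X]
  ring

lemma parts_zero (k : ℕ) : ∫ x : ℝ, (Hp (k+1)).eval x * Real.exp (-(x^2)) = 0 := by
  have h := integral_mul_deriv_eq_deriv_mul_of_integrable
    (u := fun _ : ℝ => (1:ℝ)) (u' := fun _ => (0:ℝ))
    (v := fun x => (Hp k).eval x * Real.exp (-(x^2)))
    (v' := fun x => -((Hp (k+1)).eval x * Real.exp (-(x^2))))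
    (fun x _ => hasDerivAt_const x (1:ℝ)) (fun x _ => hasDerivAt_Hp_gauss k x)
    (by
      refine ((integrable_poly_gauss (Hp (k+1))).neg).congr (ae_of_all _ fun x => ?_)
      show -((Hp (k+1)).eval x * Real.exp (-(x^2))) = _
      simp [Pi.mul_apply])
    (by
      refine (integrable_zero _ _ _).congr (ae_of_all _ fun x => ?_)
      show (0:ℝ) = _
      simp [Pi.mul_apply])
    (by
      refine (integrable_poly_gauss (Hp k)).congr (ae_of_all _ fun x => ?_)
      simp [Pi.mul_apply])
  simp only [one_mul, zero_mul, integral_zero, neg_zero] at h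
  have := h
  rw [MeasureTheory.integral_neg] at this
  linarith [this]

lemma parts_rec (j k : ℕ) :
    ∫ x : ℝ, (Hp (j+1)).eval x * ((Hp (k+1)).eval x * Real.exp (-(x^2)))
      = (2*(j+1) : ℝ) * ∫ x : ℝ, (Hp j).eval x * ((Hp k).eval x * Real.exp (-(x^2))) := by
  have h := integral_mul_deriv_eq_deriv_mul_of_integrable
    (u := fun x : ℝ => (Hp (j+1)).eval x)
    (u' := fun x : ℝ => (2*(j+1) : ℝ) * (Hp j).eval x)
    (v := fun x => (Hp k).eval x * Real.exp (-(x^2)))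
    (v' := fun x => -((Hp (k+1)).eval x * Real.exp (-(x^2))))
    (fun x _ => by
      have := (Hp (j+1)).hasDerivAt x
      rw [Hp_deriv j] at this
      simpa using this)
    (fun x _ => hasDerivAt_Hp_gauss k x)
    (by
      refine ((integrable_poly_gauss (Hp (j+1) * Hp (k+1))).neg).congr (ae_of_all _ fun x => ?_)
      show -((Hp (j+1) * Hp (k+1)).eval x * Real.exp (-(x^2))) = _
      simp [Pi.mul_apply]; ring)
    (by
      refine ((integrable_poly_gauss (Hp j * Hp k)).const_mul (2*(j+1):ℝ)).congr (ae_of_all _ fun x => ?_)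
      show (2*(j+1):ℝ) * ((Hp j * Hp k).eval x * Real.exp (-(x^2))) = _
      simp [Pi.mul_apply]; ring)
    (by
      refine (integrable_poly_gauss (Hp (j+1) * Hp k)).congr (ae_of_all _ fun x => ?_)
      simp [Pi.mul_apply]; ring)
  have h2 : ∫ x : ℝ, (Hp (j+1)).eval x * -((Hp (k+1)).eval x * Real.exp (-(x^2)))
      = - ∫ x : ℝ, (Hp (j+1)).eval x * ((Hp (k+1)).eval x * Real.exp (-(x^2))) := by
    rw [← MeasureTheory.integral_neg]; congr 1; funext x; ring
  rw [h2] at h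
  have h3 : ∫ x : ℝ, (2*(j+1) : ℝ) * (Hp j).eval x * ((Hp k).eval x * Real.exp (-(x^2)))
      = (2*(j+1) : ℝ) * ∫ x : ℝ, (Hp j).eval x * ((Hp k).eval x * Real.exp (-(x^2))) := by
    rw [← integral_const_mul]; congr 1; funext x; ring
  rw [h3] at h
  linarith [h]

lemma Hp_orth (j : ℕ) : ∀ k : ℕ,
    (∫ x : ℝ, (Hp j).eval x * ((Hp k).eval x * Real.exp (-(x^2))))
      = if j = k then (2:ℝ)^j * j.factorial * Real.sqrt π else 0 := by
  induction j with
  | zero =>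
    intro k
    cases k with
    | zero =>
      simp only [Hp_zero, eval_one, one_mul, if_pos rfl]
      have : ∫ x : ℝ, Real.exp (-(x^2)) = Real.sqrt (π / 1) := by
        rw [← integral_gaussian 1]
        congr 1; funext x; ring_nf
      rw [this]
      simp
    | succ k =>
      simp only [Hp_zero, eval_one, one_mul]
      rw [parts_zero k, if_neg (by omega)]
  | succ j ih =>
    intro k
    cases k with
    | zero =>
      have : ∫ x : ℝ, (Hp (j+1)).eval x * ((Hp 0).eval x * Real.exp (-(x^2)))
          = ∫ x : ℝ, (Hp (j+1)).eval x * Real.exp (-(x^2)) := by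
        congr 1; funext x; simp [Hp_zero]
      rw [this, parts_zero j, if_neg (by omega)]
    | succ k =>
      rw [parts_rec j k, ih k]
      by_cases h : j = k
      · subst h
        rw [if_pos rfl, if_pos rfl]
        rw [Nat.factorial_succ]
        push_cast
        ring
      · rw [if_neg h, if_neg (by omega)]
        ring

lemma psi_eq (j : ℕ) (x : ℝ) :
    psi j x = (-1:ℝ)^j * Nn j * (Hp j).eval x * Real.exp (-(x^2) / 2) := by
  rw [psi, hermitePoly_eq_eval, Nn]

lemma Hp_taylor' (n : ℕ) (x y : ℝ) :
    (Hp n).eval (x + y) = ∑ k ∈ range (n+1), (n.choose k : ℝ) * (2*y)^(n-k) * (Hp k).eval x := by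
  rw [Hp_taylor, ← Finset.sum_range_reflect]
  refine Finset.sum_congr rfl fun k hk => ?_
  rw [Finset.mem_range] at hk
  simp only [Nat.add_sub_cancel]
  have h1 : n - (n - k) = k := by omega
  rw [h1, Nat.choose_symm (by omega)]

lemma integrable_two (p q : Polynomial ℝ) (A : ℝ) :
    Integrable (fun u : ℝ => A * ((p.eval u) * ((q.eval u) * Real.exp (-(u^2))))) := by
  refine ((integrable_poly_gauss (p*q)).const_mul A).congr (ae_of_all _ fun u => ?_)
  simp only [eval_mul]; ring

lemma integrand_eq (c m : ℕ) (t u : ℝ) :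
    psi c (u - t) * psi m (u + t)
      = (-1:ℝ)^(c+m) * (Nn c * Nn m) * Real.exp (-(t^2)) *
        ∑ k ∈ range (c+1), ∑ i ∈ range (m+1),
          (((c.choose k : ℝ) * (2*(-t))^(c-k) * ((m.choose i : ℝ) * (2*t)^(m-i))) *
            ((Hp k).eval u * ((Hp i).eval u * Real.exp (-(u^2))))) := by
  have hexp : Real.exp (-((u-t)^2) / 2) * Real.exp (-((u+t)^2) / 2)
      = Real.exp (-(t^2)) * Real.exp (-(u^2)) := by
    rw [← Real.exp_add, ← Real.exp_add]
    congr 1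
    ring
  have hc : (Hp c).eval (u - t) = ∑ k ∈ range (c+1), (c.choose k : ℝ) * (2*(-t))^(c-k) * (Hp k).eval u := by
    rw [show u - t = u + (-t) by ring, Hp_taylor']
  have hm : (Hp m).eval (u + t) = ∑ i ∈ range (m+1), (m.choose i : ℝ) * (2*t)^(m-i) * (Hp i).eval u :=
    Hp_taylor' m u t
  rw [psi_eq, psi_eq]
  rw [show (-1:ℝ)^c * Nn c * (Hp c).eval (u-t) * Real.exp (-((u-t)^2)/2) *
        ((-1:ℝ)^m * Nn m * (Hp m).eval (u+t) * Real.exp (-((u+t)^2)/2))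
      = ((-1:ℝ)^c * (-1:ℝ)^m) * (Nn c * Nn m) * ((Hp c).eval (u-t) * (Hp m).eval (u+t))
          * (Real.exp (-((u-t)^2)/2) * Real.exp (-((u+t)^2)/2)) by ring]
  rw [hexp, hc, hm, ← pow_add, Finset.sum_mul_sum _ _ _ _]
  simp only [Finset.mul_sum, Finset.sum_mul]
  exact Finset.sum_congr rfl fun k _ => Finset.sum_congr rfl fun i _ => by ring

lemma psiIP_eq (r : ℝ) (c m : ℕ) :
    psiIP r c m = (-1:ℝ)^(c+m) * (Nn c * Nn m) * Real.exp (-(r^2)/4) * Real.sqrt π *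
      ∑ k ∈ range (c+1),
        (c.choose k : ℝ) * (m.choose k : ℝ) * (-r)^(c-k) * r^(m-k) * 2^k * (k.factorial : ℝ) := by
  unfold psiIP
  rw [← MeasureTheory.integral_add_right_eq_self (fun x => psi c (x - r) * psi m x) (r/2)]
  have hpt : ∀ u : ℝ, psi c (u + r/2 - r) * psi m (u + r/2) = psi c (u - r/2) * psi m (u + r/2) := by
    intro u
    congr 2
    ring
  simp only [hpt]
  have hint : ∀ u : ℝ, psi c (u - r/2) * psi m (u + r/2)
      = (-1:ℝ)^(c+m) * (Nn c * Nn m) * Real.exp (-((r/2)^2)) *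
        ∑ k ∈ range (c+1), ∑ i ∈ range (m+1),
          (((c.choose k : ℝ) * (2*(-(r/2)))^(c-k) * ((m.choose i : ℝ) * (2*(r/2))^(m-i))) *
            ((Hp k).eval u * ((Hp i).eval u * Real.exp (-(u^2))))) :=
    fun u => integrand_eq c m (r/2) u
  simp only [hint]
  rw [MeasureTheory.integral_const_mul]
  rw [MeasureTheory.integral_finset_sum _ (fun k _ => integrable_finset_sum _
    (fun i _ => integrable_two (Hp k) (Hp i) _))]
  have hsum : ∀ k ∈ range (c+1),
      (∫ u : ℝ, ∑ i ∈ range (m+1),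
          (((c.choose k : ℝ) * (2*(-(r/2)))^(c-k) * ((m.choose i : ℝ) * (2*(r/2))^(m-i))) *
            ((Hp k).eval u * ((Hp i).eval u * Real.exp (-(u^2))))))
        = ∑ i ∈ range (m+1),
            (((c.choose k : ℝ) * (2*(-(r/2)))^(c-k) * ((m.choose i : ℝ) * (2*(r/2))^(m-i))) *
              (if k = i then (2:ℝ)^k * k.factorial * Real.sqrt π else 0)) := by
    intro k _
    rw [MeasureTheory.integral_finset_sum _ (fun i _ => integrable_two (Hp k) (Hp i) _)]
    refine Finset.sum_congr rfl fun i _ => ?_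
    rw [MeasureTheory.integral_const_mul, Hp_orth k i]
  rw [Finset.sum_congr rfl hsum]
  have hr2 : (2:ℝ)*(r/2) = r := by ring
  have hr2' : (2:ℝ)*(-(r/2)) = -r := by ring
  have hcollapse : ∀ k ∈ range (c+1),
      (∑ i ∈ range (m+1),
          (((c.choose k : ℝ) * (2*(-(r/2)))^(c-k) * ((m.choose i : ℝ) * (2*(r/2))^(m-i))) *
            (if k = i then (2:ℝ)^k * k.factorial * Real.sqrt π else 0)))
        = Real.sqrt π * ((c.choose k : ℝ) * (m.choose k : ℝ) * (-r)^(c-k) * r^(m-k) * 2^k * (k.factorial : ℝ)) := by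
    intro k _
    rw [show (∑ i ∈ range (m+1),
          (((c.choose k : ℝ) * (2*(-(r/2)))^(c-k) * ((m.choose i : ℝ) * (2*(r/2))^(m-i))) *
            (if k = i then (2:ℝ)^k * k.factorial * Real.sqrt π else 0)))
        = ∑ i ∈ range (m+1), (if k = i then
            ((c.choose k : ℝ) * (2*(-(r/2)))^(c-k) * ((m.choose i : ℝ) * (2*(r/2))^(m-i))) *
              ((2:ℝ)^k * k.factorial * Real.sqrt π) else 0) from
      Finset.sum_congr rfl fun i _ => by rw [mul_ite, mul_zero]]
    rw [Finset.sum_ite_eq]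
    by_cases hkm : k ∈ range (m+1)
    · rw [if_pos hkm, hr2, hr2']
      ring
    · rw [if_neg hkm]
      rw [Finset.mem_range] at hkm
      have : (m.choose k : ℝ) = 0 := by
        rw [Nat.choose_eq_zero_of_lt (by omega)]
        simp
      rw [this]
      ring
  rw [Finset.sum_congr rfl hcollapse, ← Finset.mul_sum]
  rw [show -((r/2)^2) = -(r^2)/4 by ring]
  ring

/- determinant of a matrix whose columns are polynomials of bounded degree -/
lemma det_eval {ℓ : ℕ} (p : Fin ℓ → Polynomial ℝ) (hdeg : ∀ i : Fin ℓ, (p i).natDegree ≤ i)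
    (x : Fin ℓ → ℝ) :
    Matrix.det (Matrix.of fun b i : Fin ℓ => (p i).eval (x b))
      = (∏ i, (p i).coeff i) * Matrix.det (Matrix.vandermonde x) := by
  have hfact : Matrix.of (fun b i : Fin ℓ => (p i).eval (x b))
      = Matrix.vandermonde x * Matrix.of (fun j i : Fin ℓ => (p i).coeff j) := by
    ext b i
    rw [Matrix.mul_apply]
    simp only [Matrix.vandermonde_apply, Matrix.of_apply]
    rw [eval_eq_sum_range' (lt_of_le_of_lt (hdeg i) i.isLt), Fin.sum_univ_eq_sum_range
      (fun j => x b ^ j * (p i).coeff j)]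
    exact Finset.sum_congr rfl fun j _ => by ring
  rw [hfact, Matrix.det_mul]
  have htri : (Matrix.of (fun j i : Fin ℓ => (p i).coeff j)).BlockTriangular id := by
    intro i j hij
    exact coeff_eq_zero_of_natDegree_lt (lt_of_le_of_lt (hdeg j) hij)
  rw [Matrix.det_of_upperTriangular htri]
  rw [mul_comm]
  rfl

lemma CK_eq_det_vandermonde {ℓ : ℕ} (a : Fin ℓ → ℕ) :
    Matrix.det (Matrix.vandermonde (fun b => ((a b : ℕ) : ℝ))) = CK a := by
  rw [Matrix.det_vandermonde, CK]
  rw [Finset.prod_comm' (s := Finset.univ) (t := fun c₁ => Finset.univ.filter (· < c₁))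
    (t' := Finset.univ) (s' := fun c₂ => Finset.Ioi c₂) ?_]
  · intro x y
    simp [Finset.mem_filter, Finset.mem_Ioi]

lemma my_sqrt_pow (x : ℝ) (hx : 0 ≤ x) (n : ℕ) : Real.sqrt (x^n) = (Real.sqrt x)^n := by
  induction n with
  | zero => simp
  | succ n ih => rw [pow_succ, Real.sqrt_mul (pow_nonneg hx n), ih, pow_succ]

lemma my_sqrt_prod {ι : Type*} (s : Finset ι) (f : ι → ℝ) (h : ∀ i ∈ s, 0 ≤ f i) :
    Real.sqrt (∏ i ∈ s, f i) = ∏ i ∈ s, Real.sqrt (f i) := by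
  classical
  induction s using Finset.induction with
  | empty => simp
  | @insert j s hj ih =>
    rw [Finset.prod_insert hj, Finset.prod_insert hj,
      Real.sqrt_mul (h j (Finset.mem_insert_self j s)), ih (fun i hi => h i (Finset.mem_insert_of_mem hi))]

theorem stmt13 (r : ℝ) (hr : 0 < r) (ℓ : ℕ) (hℓ : 1 ≤ ℓ)
    (a : Fin ℓ → ℕ) (ha : StrictMono a) :
    |Matrix.det (Matrix.of fun b c : Fin ℓ => psiIP r (c : ℕ) (a b))|
      = Real.exp (-(ℓ:ℝ) * r^2 / 4) * Real.sqrt (1 / (Fl ℓ * FK a)) *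
          (r / Real.sqrt 2) ^ ((∑ c, (a c : ℤ)) - ((ℓ:ℤ) * ((ℓ:ℤ)-1)) / 2) *
          CK a := by
  classical
  -- basic quantities
  set T : ℕ := ∑ c : Fin ℓ, (c : ℕ) with hT
  set Sa : ℕ := ∑ c : Fin ℓ, a c with hSa
  have hle0 : ∀ n : ℕ, ∀ c : Fin ℓ, (c : ℕ) = n → n ≤ a c := by
    intro n
    induction n with
    | zero => intro c _; exact Nat.zero_le _
    | succ n ih =>
      intro c hc
      have hcl : (c:ℕ) < ℓ := c.isLt
      have hn : n < ℓ := by omega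
      have h1 : a ⟨n, hn⟩ < a c := ha (by simp [Fin.lt_def]; omega)
      have h2 := ih ⟨n, hn⟩ rfl
      omega
  have hle : ∀ c : Fin ℓ, (c : ℕ) ≤ a c := fun c => hle0 c.1 c rfl
  have hTSa : T ≤ Sa := Finset.sum_le_sum fun c _ => hle c
  -- the exponent
  have hexpo : ((∑ c, (a c : ℤ)) - ((ℓ:ℤ) * ((ℓ:ℤ)-1)) / 2) = ((Sa - T : ℕ) : ℤ) := by
    have h2T : (T * 2 : ℕ) = ℓ * (ℓ - 1) := by
      rw [hT, Fin.sum_univ_eq_sum_range (fun i => i)]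
      exact Finset.sum_range_id_mul_two ℓ
    have hℓcast : ((ℓ:ℤ) * ((ℓ:ℤ)-1)) = (T : ℤ) * 2 := by
      have : ((ℓ * (ℓ-1) : ℕ) : ℤ) = (ℓ:ℤ) * ((ℓ:ℤ) - 1) := by
        push_cast [Nat.cast_sub hℓ]
        ring
      rw [← this, ← h2T]
      push_cast
      ring
    rw [hℓcast]
    have : ((T:ℤ) * 2) / 2 = (T:ℤ) := by omega
    rw [this]
    push_cast [Nat.cast_sub hTSa]
    rw [hSa]
    push_cast
    ring
  -- positivity facts
  have hpi : (0:ℝ) < Real.sqrt π := Real.sqrt_pos.mpr Real.pi_pos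
  have hNnpos : ∀ j : ℕ, 0 < Nn j := by
    intro j
    rw [Nn]
    rw [inv_pos]
    apply Real.sqrt_pos.mpr
    have : (0:ℝ) < (Nat.factorial j : ℝ) := by positivity
    positivity
  have hFKpos : 0 < FK a := Finset.prod_pos fun c _ => by positivity
  have hFlpos : 0 < Fl ℓ := Finset.prod_pos fun c _ => by positivity
  set e4 : ℝ := Real.exp (-(r^2)/4) with he4
  have he4pos : 0 < e4 := Real.exp_pos _
  -- row and column scalars, column polynomials
  set R : Fin ℓ → ℝ := fun b => (-1:ℝ)^(a b) * (Nn (a b) * e4 * r^(a b)) with hR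
  set S : Fin ℓ → ℝ := fun c => (-1:ℝ)^(c:ℕ) * (Nn (c:ℕ) * Real.sqrt π) with hS
  set q : Fin ℓ → Polynomial ℝ := fun c => ∑ k ∈ range ((c:ℕ)+1),
      Polynomial.C ((((c:ℕ).choose k : ℝ)) * (-r)^((c:ℕ)-k) * 2^k / r^k) * descPochhammer ℝ k with hq
  have hentry : ∀ (b c : Fin ℓ), psiIP r (c:ℕ) (a b) = R b * (S c * (q c).eval ((a b : ℕ) : ℝ)) := by
    intro b c
    have hsum : (q c).eval ((a b : ℕ) : ℝ) = ∑ k ∈ range ((c:ℕ)+1),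
        ((((c:ℕ).choose k : ℝ)) * (-r)^((c:ℕ)-k) * 2^k / r^k) * ((a b).descFactorial k : ℝ) := by
      rw [hq, eval_finset_sum]
      exact Finset.sum_congr rfl fun k _ => by
        rw [eval_mul, eval_C, descPochhammer_eval_eq_descFactorial]
    rw [psiIP_eq, hsum, hR, hS]
    simp only []
    rw [Finset.mul_sum, Finset.mul_sum, Finset.mul_sum]
    refine Finset.sum_congr rfl fun k _ => ?_
    have hdf : ((a b).descFactorial k : ℝ) = (k.factorial : ℝ) * ((a b).choose k : ℝ) := by
      rw [← Nat.cast_mul, Nat.descFactorial_eq_factorial_mul_choose]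
    rw [hdf, pow_add]
    by_cases hk : k ≤ a b
    · rw [pow_sub₀ r (ne_of_gt hr) hk, ← he4]
      field_simp
    · have h0 : ((a b).choose k : ℝ) = 0 := by
        rw [Nat.choose_eq_zero_of_lt (by omega)]
        simp
      rw [h0]
      ring
  -- degree bound and top coefficients of q
  have hdeg : ∀ c : Fin ℓ, (q c).natDegree ≤ (c : ℕ) := by
    intro c
    rw [hq]
    refine natDegree_sum_le_of_forall_le _ _ fun k hk => ?_
    refine (natDegree_C_mul_le _ _).trans ?_
    rw [descPochhammer_natDegree]
    rw [Finset.mem_range] at hk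
    omega
  have hcoeff : ∀ c : Fin ℓ, (q c).coeff (c:ℕ) = 2^(c:ℕ) / r^(c:ℕ) := by
    intro c
    rw [hq, finset_sum_coeff]
    rw [Finset.sum_eq_single (c:ℕ)]
    · rw [coeff_C_mul]
      have hmon := monic_descPochhammer ℝ (c:ℕ)
      have : (descPochhammer ℝ (c:ℕ)).coeff (c:ℕ) = 1 := by
        have := hmon.coeff_natDegree
        rwa [descPochhammer_natDegree] at this
      rw [this, Nat.choose_self, Nat.sub_self]
      norm_num
    · intro k hk hkc
      apply coeff_eq_zero_of_natDegree_lt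
      refine lt_of_le_of_lt ((natDegree_C_mul_le _ _).trans (le_of_eq (descPochhammer_natDegree (R := ℝ) k))) ?_
      rw [Finset.mem_range] at hk
      omega
    · intro h
      exact absurd (Finset.self_mem_range_succ (c:ℕ)) h
  -- determinant factorization
  have hdet1 : Matrix.det (Matrix.of fun b c : Fin ℓ => psiIP r (c:ℕ) (a b))
      = (∏ b, R b) * ((∏ c, S c) * ((∏ c : Fin ℓ, (2:ℝ)^(c:ℕ) / r^(c:ℕ)) * CK a)) := by
    have h1 : (Matrix.of fun b c : Fin ℓ => psiIP r (c:ℕ) (a b))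
        = Matrix.of (fun b c : Fin ℓ => R b *
            (Matrix.of (fun b c : Fin ℓ => S c *
              (Matrix.of (fun b c : Fin ℓ => (q c).eval ((a b : ℕ) : ℝ))) b c)) b c) := by
      ext b c
      simp only [Matrix.of_apply]
      exact hentry b c
    rw [h1, Matrix.det_mul_column, Matrix.det_mul_row, det_eval q hdeg, CK_eq_det_vandermonde]
    rw [Finset.prod_congr rfl fun c _ => hcoeff c]
  -- absolute values
  have habs : ∀ (n : ℕ) (x : ℝ), 0 < x → |(-1:ℝ)^n * x| = x := fun n x hx => by
    rw [abs_mul, abs_pow, abs_neg, abs_one, one_pow, one_mul, abs_of_pos hx]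
  have hCKnonneg : 0 ≤ CK a := by
    refine Finset.prod_nonneg fun c₁ _ => Finset.prod_nonneg fun c₂ hc₂ => ?_
    rw [Finset.mem_filter] at hc₂
    have := ha hc₂.2
    have : (a c₂ : ℝ) ≤ (a c₁ : ℝ) := by exact_mod_cast le_of_lt this
    linarith
  rw [hdet1, abs_mul, abs_mul, abs_mul, Finset.abs_prod, Finset.abs_prod,
    abs_of_nonneg hCKnonneg]
  have habsR : ∀ b, |R b| = Nn (a b) * e4 * r^(a b) := fun b => by
    rw [hR]
    exact habs _ _ (mul_pos (mul_pos (hNnpos _) he4pos) (pow_pos hr _))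
  have habsS : ∀ c : Fin ℓ, |S c| = Nn (c:ℕ) * Real.sqrt π := fun c => by
    rw [hS]
    exact habs _ _ (mul_pos (hNnpos _) hpi)
  have habsP : |∏ c : Fin ℓ, (2:ℝ)^(c:ℕ) / r^(c:ℕ)| = ∏ c : Fin ℓ, (2:ℝ)^(c:ℕ) / r^(c:ℕ) := by
    apply abs_of_nonneg
    exact Finset.prod_nonneg fun c _ => by positivity
  rw [habsP, Finset.prod_congr rfl fun b _ => habsR b, Finset.prod_congr rfl fun c _ => habsS c]
  -- it remains to prove the scalar identity
  rw [hexpo, zpow_natCast]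
  set U : ℝ := Real.sqrt ((Real.sqrt π)^ℓ) with hUdef
  have hUpos : 0 < U := Real.sqrt_pos.mpr (by positivity)
  have hU : U * U = (Real.sqrt π)^ℓ := Real.mul_self_sqrt (by positivity)
  have h2s : Real.sqrt 2 * Real.sqrt 2 = 2 := Real.mul_self_sqrt (by norm_num)
  have h2pos : (0:ℝ) < Real.sqrt 2 := Real.sqrt_pos.mpr (by norm_num)
  have h1 : ∏ b, (Nn (a b) * e4 * r^(a b)) = (∏ b, Nn (a b)) * e4^ℓ * r^Sa := by
    rw [Finset.prod_mul_distrib, Finset.prod_mul_distrib, Finset.prod_const,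
      Finset.prod_pow_eq_pow_sum, Finset.card_univ, Fintype.card_fin, ← hSa]
  have h2 : ∏ c : Fin ℓ, (Nn (c:ℕ) * Real.sqrt π)
      = (∏ c : Fin ℓ, Nn (c:ℕ)) * (Real.sqrt π)^ℓ := by
    rw [Finset.prod_mul_distrib, Finset.prod_const, Finset.card_univ, Fintype.card_fin]
  have h3 : ∏ c : Fin ℓ, ((2:ℝ)^(c:ℕ)/r^(c:ℕ)) = 2^T / r^T := by
    rw [Finset.prod_div_distrib, Finset.prod_pow_eq_pow_sum, Finset.prod_pow_eq_pow_sum, ← hT]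
  have hNnsplit : ∀ j : ℕ, Nn j = ((Real.sqrt 2)^j * Real.sqrt (Nat.factorial j : ℝ)
      * Real.sqrt (Real.sqrt π))⁻¹ := by
    intro j
    rw [Nn]
    congr 1
    rw [Real.sqrt_mul (by positivity), Real.sqrt_mul (by positivity),
      my_sqrt_pow 2 (by norm_num)]
  have hNn1 : ∏ b, Nn (a b)
      = ((Real.sqrt 2)^Sa * Real.sqrt (FK a) * U)⁻¹ := by
    have e1 : (∏ b, Nn (a b)) = ∏ b, ((Real.sqrt 2)^(a b) * Real.sqrt (Nat.factorial (a b) : ℝ)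
        * Real.sqrt (Real.sqrt π))⁻¹ := Finset.prod_congr rfl fun b _ => hNnsplit (a b)
    rw [e1, Finset.prod_inv_distrib]
    congr 1
    rw [Finset.prod_mul_distrib, Finset.prod_mul_distrib]
    congr 1
    · congr 1
      · rw [← Finset.prod_pow_eq_pow_sum]
      · rw [FK, my_sqrt_prod _ _ (fun c _ => by positivity)]
    · rw [Finset.prod_const, Finset.card_univ, Fintype.card_fin, hUdef,
        my_sqrt_pow _ (Real.sqrt_nonneg π)]
  have hNn2 : ∏ c : Fin ℓ, Nn (c:ℕ)
      = ((Real.sqrt 2)^T * Real.sqrt (Fl ℓ) * U)⁻¹ := by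
    have e1 : (∏ c : Fin ℓ, Nn (c:ℕ)) = ∏ c : Fin ℓ, ((Real.sqrt 2)^(c:ℕ)
        * Real.sqrt (Nat.factorial (c:ℕ) : ℝ) * Real.sqrt (Real.sqrt π))⁻¹ :=
      Finset.prod_congr rfl fun c _ => hNnsplit (c:ℕ)
    rw [e1, Finset.prod_inv_distrib]
    congr 1
    rw [Finset.prod_mul_distrib, Finset.prod_mul_distrib]
    congr 1
    · congr 1
      · rw [← Finset.prod_pow_eq_pow_sum]
      · rw [Fl, ← Fin.prod_univ_eq_prod_range (fun i => ((Nat.factorial i : ℕ) : ℝ)) ℓ,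
          my_sqrt_prod _ _ (fun c _ => by positivity)]
    · rw [Finset.prod_const, Finset.card_univ, Fintype.card_fin, hUdef,
        my_sqrt_pow _ (Real.sqrt_nonneg π)]
  have he4e : e4^ℓ = Real.exp (-(ℓ:ℝ) * r^2 / 4) := by
    rw [he4, ← Real.exp_nat_mul]
    congr 1
    ring
  have hsq1 : Real.sqrt (1 / (Fl ℓ * FK a)) = (Real.sqrt (Fl ℓ) * Real.sqrt (FK a))⁻¹ := by
    rw [one_div, Real.sqrt_inv, Real.sqrt_mul (le_of_lt hFlpos)]
  have hrdiv : (r / Real.sqrt 2)^(Sa - T) = (r^Sa / r^T) / ((Real.sqrt 2)^Sa / (Real.sqrt 2)^T) := by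
    rw [div_pow, pow_sub₀ r (ne_of_gt hr) hTSa, pow_sub₀ _ (ne_of_gt h2pos) hTSa]
    ring
  have h2T : (2:ℝ)^T = (Real.sqrt 2)^T * (Real.sqrt 2)^T := by
    rw [← mul_pow, h2s]
  rw [h1, h2, h3, hNn1, hNn2, he4e, hsq1, hrdiv, h2T, ← hU]
  have hFKs : 0 < Real.sqrt (FK a) := Real.sqrt_pos.mpr hFKpos
  have hFls : 0 < Real.sqrt (Fl ℓ) := Real.sqrt_pos.mpr hFlpos
  field_simp
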